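/- Let G, a, b, x, ρ and sets A_i, W_i (i ∈ [q]), W be as in the hypotheses of the previous ball-expansion lemma (G has (a,b,ρ)-expansion-property, |W| ≤ ρkx/2, |A_i| ≥ x, |W_i| ≤ ρx/4, A_i disjoint from W∪W_i, and |⋃_{i∈I}A_i| ≥ |I|x for all I with k ≤ |I| ≤ 3k, with a ≤ kx < b/20). Suppose additionally q > 20k·(log k)/ρ, r ≥ 10·(log k)/ρ, and 0 < ρ < 1. Then there exists i ∈ [q] such that |B^r_{G−(W∪W_i)}(A_i)| ≥ kx/2. -/

import Mathlib

open Finset SimpleGraph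
open scoped Classical

variable {V : Type*}

/-- Number of ordered adjacent pairs inside `S` (= sum of degrees in the induced subgraph). -/
noncomputable def degSum [Fintype V] (G : SimpleGraph V) (S : Finset V) : ℕ :=
  ((S ×ˢ S).filter fun p => G.Adj p.1 p.2).card

/-- Average degree of the subgraph of `G` induced on `S`. -/
noncomputable def avgDegOn [Fintype V] (G : SimpleGraph V) (S : Finset V) : ℝ :=
  (degSum G S : ℝ) / (S.card : ℝ)

/-- Average degree of `G`. -/
noncomputable def avgDeg [Fintype V] (G : SimpleGraph V) : ℝ :=
  avgDegOn G Finset.univ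

/-- `cruxSize α G` is the minimum order of a subgraph of `G` with average degree at least
`α · d(G)` (equivalently, of a vertex set inducing such a subgraph). -/
noncomputable def cruxSize [Fintype V] (α : ℝ) (G : SimpleGraph V) : ℕ :=
  sInf {m | ∃ S : Finset V, S.card = m ∧ α * avgDeg G ≤ avgDegOn G S}

/-- Number of edges between `S` and its complement (counted as ordered pairs from `S` out). -/
noncomputable def crossPairs [Fintype V] (G : SimpleGraph V) (S : Finset V) : ℕ :=
  ((S ×ˢ Sᶜ).filter fun p => G.Adj p.1 p.2).card

/-- External neighbourhood of `A` in the graph `G − D`. -/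
noncomputable def nbhdIn [Fintype V] (G : SimpleGraph V) (D A : Finset V) : Finset V :=
  Finset.univ.filter fun v => v ∉ D ∧ v ∉ A ∧ ∃ u ∈ A, G.Adj u v

/-- Ball of radius `r` around `A` in the graph `G − D`. -/
noncomputable def ballIn [Fintype V] (G : SimpleGraph V) (D A : Finset V) : ℕ → Finset V
  | 0 => A
  | r + 1 => ballIn G D A r ∪ nbhdIn G D (ballIn G D A r)

/-- `G` has the `(a, b, ρ)`-expansion-property. -/
def ExpansionProperty [Fintype V] (G : SimpleGraph V) (a b ρ : ℝ) : Prop :=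
  ∀ X : Finset V, a ≤ (X.card : ℝ) → (X.card : ℝ) ≤ b →
    ρ * (X.card : ℝ) ≤ ((nbhdIn G ∅ X).card : ℝ)

/-- The Komlós–Szemerédi expansion rate function. -/
noncomputable def rho (ε k x : ℝ) : ℝ :=
  if k / 5 ≤ x then ε / (Real.log (15 * x / k)) ^ 2 else 0

/-- `(ε, k)`-robust-expander. -/
def RobustExpander [Fintype V] (G : SimpleGraph V) (ε k : ℝ) : Prop :=
  ∀ X : Finset V, k / 2 ≤ (X.card : ℝ) → (X.card : ℝ) ≤ (Fintype.card V : ℝ) / 2 →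
    ∀ F : Finset (Sym2 V), ↑F ⊆ G.edgeSet →
      (F.card : ℝ) ≤ avgDeg G * rho ε k (X.card : ℝ) * (X.card : ℝ) →
      rho ε k (X.card : ℝ) * (X.card : ℝ) ≤ ((nbhdIn (G.deleteEdges ↑F) ∅ X).card : ℝ)

/-- `G` contains a subdivision of the graph `H` (on vertex set `Fin t`): there are `t` distinct
core vertices and internally vertex-disjoint paths for the edges of `H`, whose internal
vertices avoid the cores. -/
def ContainsSubdivision {t : ℕ} (H : SimpleGraph (Fin t)) (G : SimpleGraph V) : Prop :=
  ∃ c : Fin t ↪ V, ∃ p : ∀ i j : Fin t, i < j → H.Adj i j → G.Walk (c i) (c j),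
    (∀ i j (h : i < j) (ha : H.Adj i j), (p i j h ha).IsPath) ∧
    (∀ i j (h : i < j) (ha : H.Adj i j) (k : Fin t),
        c k ∈ (p i j h ha).support → k = i ∨ k = j) ∧
    (∀ i j (h : i < j) (ha : H.Adj i j) i' j' (h' : i' < j') (ha' : H.Adj i' j'),
        (i, j) ≠ (i', j') →
        Disjoint ((p i j h ha).support.toFinset \ {c i, c j})
          ((p i' j' h' ha').support.toFinset \ {c i', c j'}))

/-- `G` contains a copy of `H` as a subgraph. -/
def ContainsCopy {W₀ : Type*} (H : SimpleGraph W₀) (G : SimpleGraph V) : Prop :=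
  ∃ f : W₀ → V, Function.Injective f ∧ ∀ a b, H.Adj a b → G.Adj (f a) (f b)

/-- Clique number of `G`. -/
noncomputable def cliqueNumber [Fintype V] (G : SimpleGraph V) : ℕ :=
  sSup {n | ∃ s : Finset V, G.IsNClique n s}


section AuxLemmas

lemma ballIn_zero' [Fintype V] (G : SimpleGraph V) (D A : Finset V) :
    ballIn G D A 0 = A := rfl

lemma ballIn_succ' [Fintype V] (G : SimpleGraph V) (D A : Finset V) (j : ℕ) :
    ballIn G D A (j+1) = ballIn G D A j ∪ nbhdIn G D (ballIn G D A j) := rfl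

lemma ballIn_mono' [Fintype V] (G : SimpleGraph V) (D A : Finset V) {j j' : ℕ} (h : j ≤ j') :
    ballIn G D A j ⊆ ballIn G D A j' := by
  induction j' with
  | zero => simp_all
  | succ n ih =>
    rcases Nat.lt_or_ge j (n+1) with h1 | h1
    · exact (ih (by omega)).trans (by rw [ballIn_succ']; exact subset_union_left)
    · have : j = n+1 := by omega
      subst this; rfl

/-- Greedy peeling lemma: from any finite family one can select a subfamily `K` whose
union still nearly covers the union of the whole family, while every subfamily of `K`
has union at least `θ` per member. -/
lemma peel_lemma {ι W : Type*} (B : ι → Finset W) (θ : ℝ) (hθ : 0 ≤ θ) (T : Finset ι) :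
    ∃ K : Finset ι, K ⊆ T ∧
      ((T.biUnion B).card : ℝ) ≤ ((K.biUnion B).card : ℝ) + T.card * θ ∧
      ∀ S : Finset ι, S ⊆ K → (S.card : ℝ) * θ ≤ ((S.biUnion B).card : ℝ) := by
  classical
  induction T using Finset.strongInduction with
  | _ T ih =>
    rcases T.eq_empty_or_nonempty with rfl | ⟨a, ha⟩
    · refine ⟨∅, Subset.rfl, by simp, ?_⟩
      intro S hS
      simp [Finset.subset_empty.mp hS]
    · obtain ⟨K', hK'sub, hcov', hspr'⟩ := ih (T.erase a) (Finset.erase_ssubset ha)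
      have hins : insert a (T.erase a) = T := Finset.insert_erase ha
      have hK'E : K'.biUnion B ⊆ (T.erase a).biUnion B :=
        Finset.biUnion_subset_biUnion_of_subset_left _ hK'sub
      have hTsplit : T.biUnion B = B a ∪ (T.erase a).biUnion B := by
        conv_lhs => rw [← hins]
        rw [Finset.biUnion_insert]
      have hcard1 : (1:ℝ) ≤ T.card := by
        have := Finset.card_pos.mpr ⟨a, ha⟩; exact_mod_cast this
      have hcardE : ((T.erase a).card : ℝ) = (T.card : ℝ) - 1 := by
        have := Finset.card_erase_of_mem ha
        have h2 := Finset.card_pos.mpr ⟨a, ha⟩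
        rw [this]; push_cast [Nat.cast_sub h2]; ring
      have hEminus : (((T.erase a).biUnion B \ K'.biUnion B).card : ℝ)
          ≤ ((T.card : ℝ) - 1) * θ := by
        have h1 : (((T.erase a).biUnion B \ K'.biUnion B).card : ℝ)
            = ((T.erase a).biUnion B).card - (K'.biUnion B).card := by
          rw [Finset.card_sdiff_of_subset hK'E, Nat.cast_sub (Finset.card_le_card hK'E)]
        rw [h1, ← hcardE]
        linarith
      by_cases hkeep : θ ≤ ((B a \ K'.biUnion B).card : ℝ)
      · refine ⟨insert a K', ?_, ?_, ?_⟩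
        · intro i hi
          rcases Finset.mem_insert.mp hi with rfl | hi
          · exact ha
          · exact (Finset.erase_subset _ _) (hK'sub hi)
        · have hKU : (insert a K').biUnion B = B a ∪ K'.biUnion B := Finset.biUnion_insert
          have hsub : T.biUnion B ⊆ (B a ∪ K'.biUnion B) ∪
              ((T.erase a).biUnion B \ K'.biUnion B) := by
            rw [hTsplit]
            intro v hv
            rcases Finset.mem_union.mp hv with h | h
            · exact Finset.mem_union_left _ (Finset.mem_union_left _ h)
            · by_cases hvK : v ∈ K'.biUnion B
              · exact Finset.mem_union_left _ (Finset.mem_union_right _ hvK)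
              · exact Finset.mem_union_right _ (Finset.mem_sdiff.mpr ⟨h, hvK⟩)
          have h1 : (T.biUnion B).card ≤ ((B a ∪ K'.biUnion B)).card +
              (((T.erase a).biUnion B \ K'.biUnion B)).card :=
            le_trans (Finset.card_le_card hsub) (Finset.card_union_le _ _)
          have h1R : ((T.biUnion B).card : ℝ) ≤ (((B a ∪ K'.biUnion B)).card : ℝ) +
              (((T.erase a).biUnion B \ K'.biUnion B)).card := by exact_mod_cast h1
          rw [hKU]
          nlinarith [hEminus]
        · intro S hS
          by_cases haS : a ∈ S
          · have hSsub : S.erase a ⊆ K' := by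
              intro i hi
              have h2 := hS (Finset.erase_subset _ _ hi)
              rcases Finset.mem_insert.mp h2 with rfl | h3
              · exact absurd (Finset.mem_erase.mp hi).1 (by simp)
              · exact h3
            have hSsplit : S.biUnion B = B a ∪ (S.erase a).biUnion B := by
              conv_lhs => rw [← Finset.insert_erase haS, Finset.biUnion_insert]
            have hSEK : (S.erase a).biUnion B ⊆ K'.biUnion B :=
              Finset.biUnion_subset_biUnion_of_subset_left _ hSsub
            have hmono : B a \ K'.biUnion B ⊆ B a \ (S.erase a).biUnion B :=
              Finset.sdiff_subset_sdiff (Finset.Subset.refl _) hSEK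
            have hBa : θ ≤ ((B a \ (S.erase a).biUnion B).card : ℝ) :=
              le_trans hkeep (by exact_mod_cast Finset.card_le_card hmono)
            have hcardsum : ((S.biUnion B).card : ℝ)
                = ((B a \ (S.erase a).biUnion B).card : ℝ) + ((S.erase a).biUnion B).card := by
              rw [hSsplit, ← Finset.card_sdiff_add_card]
              push_cast; ring
            have hIH := hspr' (S.erase a) hSsub
            have hScard : ((S.erase a).card : ℝ) = (S.card : ℝ) - 1 := by
              rw [Finset.card_erase_of_mem haS]
              have h2 := Finset.card_pos.mpr ⟨a, haS⟩
              push_cast [Nat.cast_sub h2]; ring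
            rw [hScard] at hIH
            rw [hcardsum]
            nlinarith
          · exact hspr' S (fun i hi => by
              rcases Finset.mem_insert.mp (hS hi) with rfl | h3
              · exact absurd hi haS
              · exact h3)
      · push_neg at hkeep
        refine ⟨K', fun i hi => (Finset.erase_subset _ _) (hK'sub hi), ?_, hspr'⟩
        have hsub : T.biUnion B ⊆ K'.biUnion B ∪
            ((T.erase a).biUnion B \ K'.biUnion B) ∪ (B a \ K'.biUnion B) := by
          rw [hTsplit]
          intro v hv
          by_cases hvK : v ∈ K'.biUnion B
          · exact Finset.mem_union_left _ (Finset.mem_union_left _ hvK)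
          · rcases Finset.mem_union.mp hv with h | h
            · exact Finset.mem_union_right _ (Finset.mem_sdiff.mpr ⟨h, hvK⟩)
            · exact Finset.mem_union_left _
                (Finset.mem_union_right _ (Finset.mem_sdiff.mpr ⟨h, hvK⟩))
        have h1 : (T.biUnion B).card ≤ (K'.biUnion B).card +
            (((T.erase a).biUnion B \ K'.biUnion B)).card + ((B a \ K'.biUnion B)).card := by
          calc (T.biUnion B).card ≤ _ := Finset.card_le_card hsub
          _ ≤ _ := le_trans (Finset.card_union_le _ _)
              (by gcongr; exact Finset.card_union_le _ _)
        have h1R : ((T.biUnion B).card : ℝ) ≤ ((K'.biUnion B).card : ℝ) +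
            (((T.erase a).biUnion B \ K'.biUnion B)).card + ((B a \ K'.biUnion B)).card := by
          exact_mod_cast h1
        nlinarith [hEminus]

lemma exists_sstar_aux {ρ : ℝ} (hρ0 : 0 < ρ) (hρ1 : ρ < 1) :
    ∃ s : ℕ, ((9:ℝ) ≤ (1+ρ/2)^s) ∧ ((s:ℝ) ≤ 9/ρ) := by
  refine ⟨⌈(8:ℝ)/ρ⌉₊, ?_, ?_⟩
  · have h0 : (0:ℝ) < 1+ρ/2 := by linarith
    set v : ℝ := ρ/(2+ρ) with hv
    have h2ρ : (0:ℝ) < 2+ρ := by linarith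
    have hv0 : (0:ℝ) ≤ v := by rw [hv]; positivity
    have hexpv : Real.exp v ≤ 1+ρ/2 := by
      have h2 : 1 - v ≤ Real.exp (-v) := by
        have := Real.add_one_le_exp (-v); linarith
      have h3 : (1:ℝ) - v = 2/(2+ρ) := by rw [hv]; field_simp; ring
      have h4 : (0:ℝ) < 1 - v := by rw [h3]; positivity
      have h5 : Real.exp (-v) * Real.exp v = 1 := by
        rw [← Real.exp_add]; simp
      have h6 : (1 - v) * Real.exp v ≤ 1 := by
        nlinarith [Real.exp_pos v, h2, h5]
      have h7 : (1+ρ/2) * (1-v) = 1 := by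
        rw [h3]; field_simp
      have h8 : Real.exp v ≤ 1/(1-v) := by
        rw [le_div_iff₀ h4]; linarith [h6]
      have h9 : 1/(1-v) = 1+ρ/2 := by
        rw [eq_comm, eq_div_iff (ne_of_gt h4)]; linarith [h7]
      linarith
    have hlogv : v ≤ Real.log (1+ρ/2) := (Real.le_log_iff_exp_le h0).mpr hexpv
    have hv3 : ρ/3 ≤ v := by
      rw [hv, div_le_div_iff₀ (by norm_num) h2ρ]
      nlinarith
    have hsge : (8:ℝ)/ρ ≤ (⌈(8:ℝ)/ρ⌉₊:ℝ) := Nat.le_ceil _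
    have hsl : (8:ℝ)/3 ≤ (⌈(8:ℝ)/ρ⌉₊:ℝ) * Real.log (1+ρ/2) := by
      have h1 : (8/ρ) * (ρ/3) ≤ (⌈(8:ℝ)/ρ⌉₊:ℝ) * Real.log (1+ρ/2) :=
        mul_le_mul hsge (le_trans hv3 hlogv) (by positivity) (by positivity)
      have h2 : (8/ρ) * (ρ/3) = 8/3 := by field_simp
      linarith
    have hexp9 : (9:ℝ) ≤ Real.exp (8/3) := by
      have h1 : (2.71:ℝ) < Real.exp 1 := lt_trans (by norm_num) Real.exp_one_gt_d9
      have h2 : Real.exp (8/3) = Real.exp 1 * Real.exp 1 * Real.exp (2/3) := by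
        rw [← Real.exp_add, ← Real.exp_add]; norm_num
      have h3 : (1:ℝ) + 2/3 ≤ Real.exp (2/3) := by
        have := Real.add_one_le_exp ((2:ℝ)/3); linarith
      nlinarith [Real.exp_pos ((2:ℝ)/3), Real.exp_pos (1:ℝ)]
    calc (9:ℝ) ≤ Real.exp (8/3) := hexp9
    _ ≤ Real.exp ((⌈(8:ℝ)/ρ⌉₊:ℝ) * Real.log (1+ρ/2)) := Real.exp_le_exp.mpr hsl
    _ = (1+ρ/2)^(⌈(8:ℝ)/ρ⌉₊:ℕ) := by
        rw [← Real.log_pow, Real.exp_log (by positivity)]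
  · have h1 : ((⌈(8:ℝ)/ρ⌉₊:ℕ):ℝ) < 8/ρ + 1 := Nat.ceil_lt_add_one (by positivity)
    have h2 : (1:ℝ) ≤ 1/ρ := by
      rw [le_div_iff₀ hρ0]; linarith
    have h3 : (8:ℝ)/ρ + 1/ρ = 9/ρ := by ring
    linarith

lemma exists_n0_aux {k : ℕ} (hk3 : 3 ≤ k) (hlogk : 1 ≤ Real.log k) :
    ∃ m : ℕ, k < 8^m * 8 ∧ 9 * ((m:ℝ)+1) ≤ 10 * Real.log k := by
  refine ⟨Nat.log 8 k, ?_, ?_⟩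
  · have h1 := Nat.lt_pow_succ_log_self (by norm_num : 1 < 8) k
    rwa [pow_succ] at h1
  · by_cases hk8 : k < 8
    · have h0 : Nat.log 8 k = 0 := Nat.log_eq_zero_iff.mpr (Or.inl hk8)
      rw [h0]
      push_cast
      linarith [hlogk]
    · push_neg at hk8
      have hpow : (8:ℕ)^(Nat.log 8 k) ≤ k := Nat.pow_log_le_self 8 (by omega)
      have hpowR : ((8:ℝ))^(Nat.log 8 k) ≤ (k:ℝ) := by exact_mod_cast hpow
      have hlog8 : (2:ℝ) ≤ Real.log 8 := by
        rw [Real.le_log_iff_exp_le (by norm_num)]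
        have h1 : Real.exp 1 < 2.72 := lt_trans Real.exp_one_lt_d9 (by norm_num)
        have h2 : Real.exp 2 = Real.exp 1 * Real.exp 1 := by
          rw [← Real.exp_add]; norm_num
        nlinarith [Real.exp_pos 1]
      have hlogpow : ((Nat.log 8 k : ℕ):ℝ) * Real.log 8 ≤ Real.log k := by
        rw [← Real.log_pow]
        exact Real.log_le_log (by positivity) hpowR
      have hk8R : (8:ℝ) ≤ (k:ℝ) := by exact_mod_cast hk8
      have hlogk8 : (2:ℝ) ≤ Real.log k := by
        calc (2:ℝ) ≤ Real.log 8 := hlog8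
        _ ≤ Real.log k := Real.log_le_log (by norm_num) hk8R
      have hn₀0 : (0:ℝ) ≤ ((Nat.log 8 k : ℕ):ℝ) := Nat.cast_nonneg _
      nlinarith [mul_nonneg hn₀0 (by linarith [hlog8] : (0:ℝ) ≤ Real.log 8 - 2),
        hlogpow, hlogk8]

end AuxLemmas

set_option maxHeartbeats 1000000 in
/-- corollary giving a single index whose ball reaches size `kx/2`. -/
theorem statement_6 [Fintype V] (G : SimpleGraph V) (q k r x : ℕ) (a b ρ : ℝ)
    (hq : 0 < q) (hk : 0 < k) (hr : 0 < r) (hx : 0 < x)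
    (hρ0 : 0 < ρ) (hρ1 : ρ < 1)
    (hax : a ≤ (k : ℝ) * (x : ℝ)) (hxb : (k : ℝ) * (x : ℝ) < b / 20)
    (hqbig : 20 * (k : ℝ) * Real.log k / ρ < (q : ℝ))
    (hrbig : 10 * Real.log k / ρ ≤ (r : ℝ))
    (hG : ExpansionProperty G a b ρ)
    (W : Finset V) (Wi Ai : Fin q → Finset V)
    (hW : (W.card : ℝ) ≤ ρ * (k : ℝ) * (x : ℝ) / 2)
    (hA : ∀ i, (x : ℝ) ≤ ((Ai i).card : ℝ))
    (hWi : ∀ i, ((Wi i).card : ℝ) ≤ ρ * (x : ℝ) / 4)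
    (hd1 : ∀ i, Disjoint (Ai i) (Wi i)) (hd2 : ∀ i, Disjoint (Ai i) W)
    (hcoll : ∀ I : Finset (Fin q), k ≤ I.card → I.card ≤ 3 * k →
      (I.card : ℝ) * (x : ℝ) ≤ ((I.biUnion Ai).card : ℝ)) :
    ∃ i : Fin q, (k : ℝ) * (x : ℝ) / 2 ≤ ((ballIn G (W ∪ Wi i) (Ai i) r).card : ℝ) := by
  classical
  -- trivial case k ≤ 2 : the ball contains A i which already has ≥ x ≥ kx/2 vertices
  by_cases hk2 : k ≤ 2
  · refine ⟨⟨0, hq⟩, ?_⟩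
    set i : Fin q := ⟨0, hq⟩
    have h1 : (Ai i) ⊆ ballIn G (W ∪ Wi i) (Ai i) r := by
      have h := ballIn_mono' G (W ∪ Wi i) (Ai i) (Nat.zero_le r)
      rwa [ballIn_zero'] at h
    have h2 : ((Ai i).card : ℝ) ≤ ((ballIn G (W ∪ Wi i) (Ai i) r).card : ℝ) := by
      exact_mod_cast Finset.card_le_card h1
    have h3 := hA i
    have hk2R : (k:ℝ) ≤ 2 := by exact_mod_cast hk2
    have hx0 : (0:ℝ) ≤ x := by positivity
    nlinarith
  push_neg at hk2
  -- now k ≥ 3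
  have hk3 : 3 ≤ k := hk2
  have hk3R : (3:ℝ) ≤ (k:ℝ) := by exact_mod_cast hk3
  have hx1 : (1:ℝ) ≤ (x:ℝ) := by exact_mod_cast hx
  have hkx0 : (0:ℝ) < (k:ℝ) * x := by positivity
  have hb18 : 18*((k:ℝ)*x) < b := by nlinarith [hxb]
  have he3 : Real.exp 1 < 3 := lt_trans Real.exp_one_lt_d9 (by norm_num)
  have hlogk : 1 ≤ Real.log k := by
    rw [Real.le_log_iff_exp_le (by positivity)]
    linarith
  have hq2k : 2 * k ≤ q := by
    have h1 : (0:ℝ) ≤ 20 * (k:ℝ) * Real.log k := by positivity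
    have h2 : 20 * (k:ℝ) * Real.log k ≤ 20 * (k:ℝ) * Real.log k / ρ := by
      rw [le_div_iff₀ hρ0]
      nlinarith
    have h3 : ((2*k : ℕ):ℝ) < (q:ℝ) := by
      push_cast
      nlinarith [hqbig]
    exact_mod_cast h3.le
  -- notation
  set Bl : Fin q → ℕ → Finset V := fun i j => ballIn G (W ∪ Wi i) (Ai i) j with hBl
  set u : Finset (Fin q) → ℕ → ℝ := fun T j => ((T.biUnion (fun i => Bl i j)).card : ℝ)
    with hudef
  have hBmono : ∀ (i : Fin q) {j j' : ℕ}, j ≤ j' → Bl i j ⊆ Bl i j' := by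
    intro i j j' h
    exact ballIn_mono' G (W ∪ Wi i) (Ai i) h
  have humono : ∀ (T : Finset (Fin q)) {j j' : ℕ}, j ≤ j' → u T j ≤ u T j' := by
    intro T j j' h
    simp only [hudef]
    have hsub : T.biUnion (fun i => Bl i j) ⊆ T.biUnion (fun i => Bl i j') := by
      intro v hv
      obtain ⟨i, hiT, hvB⟩ := Finset.mem_biUnion.mp hv
      exact Finset.mem_biUnion.mpr ⟨i, hiT, hBmono i h hvB⟩
    exact_mod_cast Finset.card_le_card hsub
  -- bound on the removed sets
  have hWsum : ∀ T : Finset (Fin q), ((W ∪ T.biUnion Wi).card : ℝ)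
      ≤ ρ*((k:ℝ)*x)/2 + T.card * (ρ*x/4) := by
    intro T
    have h1 : (W ∪ T.biUnion Wi).card ≤ W.card + (T.biUnion Wi).card := Finset.card_union_le _ _
    have h2 : (T.biUnion Wi).card ≤ ∑ i ∈ T, (Wi i).card := Finset.card_biUnion_le
    have h3 : (((∑ i ∈ T, (Wi i).card : ℕ)) : ℝ) ≤ T.card * (ρ*x/4) := by
      push_cast
      calc ∑ i ∈ T, ((Wi i).card : ℝ) ≤ ∑ _i ∈ T, (ρ*(x:ℝ)/4) :=
            Finset.sum_le_sum (fun i _ => hWi i)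
      _ = T.card * (ρ*(x:ℝ)/4) := by rw [Finset.sum_const, nsmul_eq_mul]
    have h1R : ((W ∪ T.biUnion Wi).card : ℝ) ≤ (W.card : ℝ) + ((T.biUnion Wi).card : ℝ) := by
      exact_mod_cast h1
    have h2R : ((T.biUnion Wi).card : ℝ) ≤ ((∑ i ∈ T, (Wi i).card : ℕ) : ℝ) := by
      exact_mod_cast h2
    calc ((W ∪ T.biUnion Wi).card : ℝ) ≤ (W.card : ℝ) + ((T.biUnion Wi).card : ℝ) := h1R
    _ ≤ ρ*((k:ℝ)*x)/2 + T.card * (ρ*x/4) := by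
        have := hW
        nlinarith [h2R, h3]
  -- one-step expansion of the union of a small family of balls
  have step : ∀ (T : Finset (Fin q)) (j : ℕ), T.card ≤ 2*k → 2*((k:ℝ)*x) ≤ u T j →
      u T j < 18*((k:ℝ)*x) → u T j + ρ * (u T j - (k:ℝ)*x) ≤ u T (j+1) := by
    intro T j hTcard hlo hhi
    have hTR : (T.card : ℝ) ≤ 2*(k:ℝ) := by
      have h0 : ((2*k:ℕ):ℝ) = 2*(k:ℝ) := by push_cast; ring
      rw [← h0]; exact_mod_cast hTcard
    have huX : u T j = ((T.biUnion (fun i => Bl i j)).card : ℝ) := rfl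
    set X := T.biUnion (fun i => Bl i j) with hX
    have hXa : a ≤ (X.card:ℝ) := by rw [← huX]; linarith [hax, hkx0, hlo]
    have hXb : (X.card:ℝ) ≤ b := by rw [← huX]; linarith [hb18, hhi]
    have hNba := hG X hXa hXb
    set N := nbhdIn G ∅ X with hN
    set Bad := W ∪ T.biUnion Wi with hBad
    have hmemN : ∀ v, v ∈ N → v ∉ X ∧ ∃ w ∈ X, G.Adj w v := by
      intro v hv
      rw [hN, nbhdIn, Finset.mem_filter] at hv
      exact ⟨hv.2.2.1, hv.2.2.2⟩
    have hsub : X ∪ (N \ Bad) ⊆ T.biUnion (fun i => Bl i (j+1)) := by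
      apply Finset.union_subset
      · intro v hv
        obtain ⟨i, hiT, hvB⟩ := Finset.mem_biUnion.mp hv
        exact Finset.mem_biUnion.mpr ⟨i, hiT, hBmono i (Nat.le_succ j) hvB⟩
      · intro v hv
        obtain ⟨hvN, hvBad⟩ := Finset.mem_sdiff.mp hv
        obtain ⟨hvX, w, hwX, hadj⟩ := hmemN v hvN
        obtain ⟨i, hiT, hwB⟩ := Finset.mem_biUnion.mp hwX
        refine Finset.mem_biUnion.mpr ⟨i, hiT, ?_⟩
        simp only [hBl] at hwB ⊢
        rw [ballIn_succ']
        apply Finset.mem_union_right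
        rw [nbhdIn, Finset.mem_filter]
        refine ⟨Finset.mem_univ v, ?_, ?_, ⟨w, hwB, hadj⟩⟩
        · intro hvWWi
          apply hvBad
          rw [hBad]
          rcases Finset.mem_union.mp hvWWi with h | h
          · exact Finset.mem_union_left _ h
          · exact Finset.mem_union_right _ (Finset.mem_biUnion.mpr ⟨i, hiT, h⟩)
        · intro hvB
          apply hvX
          rw [hX]
          refine Finset.mem_biUnion.mpr ⟨i, hiT, ?_⟩
          simp only [hBl]
          exact hvB
    have hdisj : Disjoint X (N \ Bad) := by
      rw [Finset.disjoint_right]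
      intro v hv
      exact ((hmemN v (Finset.mem_sdiff.mp hv).1).1)
    have hcard : X.card + (N \ Bad).card ≤ (T.biUnion (fun i => Bl i (j+1))).card := by
      rw [← Finset.card_union_of_disjoint hdisj]
      exact Finset.card_le_card hsub
    have hNB : (N.card : ℝ) ≤ ((N \ Bad).card : ℝ) + (Bad.card : ℝ) := by
      have h1 : N ⊆ (N \ Bad) ∪ Bad := by
        intro v hv
        by_cases h : v ∈ Bad
        · exact Finset.mem_union_right _ h
        · exact Finset.mem_union_left _ (Finset.mem_sdiff.mpr ⟨hv, h⟩)
      have h2 := le_trans (Finset.card_le_card h1) (Finset.card_union_le _ _)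
      exact_mod_cast h2
    have hBadR : (Bad.card : ℝ) ≤ ρ*((k:ℝ)*x) := by
      have h1 := hWsum T
      rw [← hBad] at h1
      have h2 : (T.card:ℝ) * (ρ*(x:ℝ)/4) ≤ (2*(k:ℝ)) * (ρ*(x:ℝ)/4) :=
        mul_le_mul_of_nonneg_right hTR (by positivity)
      nlinarith [h1, h2]
    have hfin : (X.card : ℝ) + ((N \ Bad).card : ℝ) ≤ u T (j+1) := by
      have h0 : u T (j+1) = ((T.biUnion (fun i => Bl i (j+1))).card : ℝ) := rfl
      rw [h0]
      exact_mod_cast hcard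
    rw [huX] at hlo hhi ⊢
    linarith [hNba, hNB, hBadR, hfin]
  -- iterated expansion
  have grow : ∀ (T : Finset (Fin q)), T.card ≤ 2*k → ∀ (j : ℕ), 2*((k:ℝ)*x) ≤ u T j →
      ∀ s : ℕ, min (18*((k:ℝ)*x)) ((1+ρ/2)^s * (2*((k:ℝ)*x))) ≤ u T (j+s) := by
    intro T hT j hu0 s
    induction s with
    | zero =>
      have : (1+ρ/2)^0 * (2*((k:ℝ)*x)) = 2*((k:ℝ)*x) := by norm_num
      rw [Nat.add_zero]
      exact le_trans (min_le_right _ _) (by rw [this]; exact hu0)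
    | succ n ihs =>
      by_cases h18 : 18*((k:ℝ)*x) ≤ u T (j+n)
      · exact le_trans (min_le_left _ _)
          (le_trans h18 (humono T (by omega)))
      · push_neg at h18
        have hone : (1:ℝ) ≤ 1+ρ/2 := by linarith
        have hpow1 : (1:ℝ) ≤ (1+ρ/2)^n := one_le_pow₀ hone
        have hpow0 : (0:ℝ) < (1+ρ/2)^n := by positivity
        have hmin : (1+ρ/2)^n * (2*((k:ℝ)*x)) ≤ u T (j+n) := by
          rcases le_total (18*((k:ℝ)*x)) ((1+ρ/2)^n * (2*((k:ℝ)*x))) with hcase | hcase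
          · rw [min_eq_left hcase] at ihs
            linarith
          · rwa [min_eq_right hcase] at ihs
        have hu2 : 2*((k:ℝ)*x) ≤ u T (j+n) := by
          have h1 : (1:ℝ) * (2*((k:ℝ)*x)) ≤ (1+ρ/2)^n * (2*((k:ℝ)*x)) :=
            mul_le_mul_of_nonneg_right hpow1 (by positivity)
          rw [one_mul] at h1
          linarith
        have hstep := step T (j+n) hT hu2 h18
        have hgeo : (1+ρ/2) * u T (j+n) ≤ u T (j+n+1) := by
          have hp : (0:ℝ) ≤ ρ * (u T (j+n) - 2*((k:ℝ)*x)) :=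
            mul_nonneg hρ0.le (by linarith)
          nlinarith [hstep, hp]
        calc min (18*((k:ℝ)*x)) ((1+ρ/2)^(n+1) * (2*((k:ℝ)*x)))
            ≤ (1+ρ/2)^(n+1) * (2*((k:ℝ)*x)) := min_le_right _ _
        _ = (1+ρ/2) * ((1+ρ/2)^n * (2*((k:ℝ)*x))) := by ring
        _ ≤ (1+ρ/2) * u T (j+n) := mul_le_mul_of_nonneg_left hmin (by linarith)
        _ ≤ u T (j+n+1) := hgeo
  -- number of steps needed to multiply the union size by 9
  obtain ⟨sstar, hs9, hsR⟩ := exists_sstar_aux hρ0 hρ1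
  have expand : ∀ (T : Finset (Fin q)), T.card ≤ 2*k → ∀ (j:ℕ), 2*((k:ℝ)*x) ≤ u T j →
      18*((k:ℝ)*x) ≤ u T (j + sstar) := by
    intro T hT j hu0
    have h := grow T hT j hu0 sstar
    have h2 : 18*((k:ℝ)*x) ≤ (1+ρ/2)^sstar * (2*((k:ℝ)*x)) := by nlinarith [hs9, hkx0]
    exact le_trans (le_min le_rfl h2) h
  -- the main recursion : expand, peel, recurse
  have main : ∀ n : ℕ, ∀ T : Finset (Fin q), T.card ≤ 2*k → T.card ≤ 36 * 8^n →
      ∀ j : ℕ, 2*((k:ℝ)*x) ≤ u T j → j + (n+1) * sstar ≤ r →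
      ∃ i : Fin q, (k:ℝ)*x/2 ≤ ((ballIn G (W ∪ Wi i) (Ai i) r).card : ℝ) := by
    intro n
    induction n with
    | zero =>
      intro T hT2k hT36 j hu0 hbud
      have h18 := expand T hT2k j hu0
      have hjr : j + sstar ≤ r := by omega
      by_contra hcon
      push_neg at hcon
      have hTne : T.Nonempty := by
        rcases T.eq_empty_or_nonempty with rfl | h
        · exfalso
          have h0 : u (∅ : Finset (Fin q)) (j+sstar) = 0 := by
            simp [hudef]
          rw [h0] at h18
          nlinarith
        · exact h
      have hsum : u T (j+sstar) ≤ ∑ i ∈ T, ((Bl i (j+sstar)).card : ℝ) := by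
        have h1 : (T.biUnion (fun i => Bl i (j+sstar))).card
            ≤ ∑ i ∈ T, (Bl i (j+sstar)).card := Finset.card_biUnion_le
        have h2 : u T (j+sstar) = ((T.biUnion (fun i => Bl i (j+sstar))).card : ℝ) := rfl
        rw [h2]
        push_cast
        exact_mod_cast h1
      have hlt : ∑ i ∈ T, ((Bl i (j+sstar)).card : ℝ) < ∑ _i ∈ T, (k:ℝ)*x/2 := by
        apply Finset.sum_lt_sum_of_nonempty hTne
        intro i _
        calc ((Bl i (j+sstar)).card : ℝ) ≤ ((Bl i r).card : ℝ) := by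
              exact_mod_cast Finset.card_le_card (hBmono i hjr)
        _ < (k:ℝ)*x/2 := by
              have := hcon i
              simpa [hBl] using this
      have hsc : ∑ _i ∈ T, (k:ℝ)*x/2 ≤ 36 * ((k:ℝ)*x/2) := by
        rw [Finset.sum_const, nsmul_eq_mul]
        have hTR : (T.card:ℝ) ≤ 36 := by
          have h36 : T.card ≤ 36 := by simpa using hT36
          exact_mod_cast h36
        nlinarith [hkx0]
      linarith [h18, hsum, hlt, hsc]
    | succ n ihn =>
      intro T hT2k hT36 j hu0 hbud
      have hmul : (n+1+1)*sstar = (n+1)*sstar + sstar := by ring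
      by_cases hsmall : T.card ≤ 36 * 8^n
      · apply ihn T hT2k hsmall j hu0
        rw [hmul] at hbud
        omega
      · push_neg at hsmall
        have ht37 : 37 ≤ T.card := by
          have h8 : 1 ≤ 8^n := Nat.one_le_pow _ _ (by norm_num)
          omega
        have h18 := expand T hT2k j hu0
        have ht0R : (0:ℝ) < (T.card:ℝ) := by
          have h0 : (0:ℕ) < T.card := by omega
          exact_mod_cast h0
        set θ : ℝ := 16*((k:ℝ)*x)/(T.card:ℝ) with hθ
        have hθ0 : 0 ≤ θ := by rw [hθ]; positivity
        obtain ⟨Kp, hKpT, hcover, hspread⟩ := peel_lemma (fun i => Bl i (j+sstar)) θ hθ0 T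
        have htθ : (T.card:ℝ) * θ = 16*((k:ℝ)*x) := by
          rw [hθ]; field_simp
        have hKU : 2*((k:ℝ)*x) ≤ ((Kp.biUnion (fun i => Bl i (j+sstar))).card : ℝ) := by
          have hu18 : 18*((k:ℝ)*x) ≤ ((T.biUnion (fun i => Bl i (j+sstar))).card:ℝ) := h18
          rw [htθ] at hcover
          linarith
        have hmain2 : ∃ T'' : Finset (Fin q), T'' ⊆ Kp ∧ T''.card ≤ (T.card+7)/8 ∧
            2*((k:ℝ)*x) ≤ ((T''.biUnion (fun i => Bl i (j+sstar))).card : ℝ) := by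
          rcases le_or_gt Kp.card ((T.card+7)/8) with hc | hc
          · exact ⟨Kp, Finset.Subset.refl _, hc, hKU⟩
          · obtain ⟨T'', hT''K, hT''card⟩ := Finset.exists_subset_card_eq hc.le
            refine ⟨T'', hT''K, le_of_eq hT''card, ?_⟩
            have hsp := hspread T'' hT''K
            rw [hT''card] at hsp
            have hp8 : (T.card:ℝ)/8 ≤ (((T.card+7)/8 : ℕ):ℝ) := by
              have h1 : T.card ≤ 8 * ((T.card+7)/8) := by omega
              have h2 : (T.card:ℝ) ≤ 8 * (((T.card+7)/8 : ℕ):ℝ) := by exact_mod_cast h1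
              linarith
            have h3 : 2*((k:ℝ)*x) ≤ (((T.card+7)/8 : ℕ):ℝ) * θ := by
              rw [hθ]
              have h4 : (T.card:ℝ)/8 * (16*((k:ℝ)*x)/(T.card:ℝ)) = 2*((k:ℝ)*x) := by
                field_simp; ring
              calc 2*((k:ℝ)*x) = (T.card:ℝ)/8 * (16*((k:ℝ)*x)/(T.card:ℝ)) := h4.symm
              _ ≤ (((T.card+7)/8 : ℕ):ℝ) * (16*((k:ℝ)*x)/(T.card:ℝ)) :=
                  mul_le_mul_of_nonneg_right hp8 (by positivity)
            linarith
        obtain ⟨T'', hT''K, hT''p, hT''u⟩ := hmain2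
        have hT''T : T'' ⊆ T := hT''K.trans hKpT
        refine ihn T'' (le_trans (Finset.card_le_card hT''T) hT2k) ?_ (j+sstar) hT''u ?_
        · have hpow : (8:ℕ)^(n+1) = 8^n * 8 := pow_succ 8 n
          rw [hpow] at hT36
          omega
        · rw [hmul] at hbud
          omega
  -- assemble
  have hqcard : 2*k ≤ (Finset.univ : Finset (Fin q)).card := by
    simpa using hq2k
  obtain ⟨T₀, hT₀u, hT₀card⟩ := Finset.exists_subset_card_eq hqcard
  have hu0 : 2*((k:ℝ)*x) ≤ u T₀ 0 := by
    have h1 : T₀.biUnion (fun i => Bl i 0) = T₀.biUnion Ai := rfl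
    have h2 := hcoll T₀ (by omega) (by omega)
    rw [hT₀card] at h2
    simp only [hudef]
    rw [h1]
    push_cast at h2 ⊢
    linarith
  obtain ⟨n₀, hn₀pow, hn₀R⟩ := exists_n0_aux hk3 hlogk
  have hT₀36 : T₀.card ≤ 36 * 8^n₀ := by
    rw [hT₀card]
    omega
  have hbud : 0 + (n₀+1) * sstar ≤ r := by
    have hfinR : (((n₀+1) * sstar : ℕ):ℝ) ≤ (r:ℝ) := by
      have h1 : ((n₀:ℝ)+1) * (sstar:ℝ) ≤ ((n₀:ℝ)+1) * (9/ρ) :=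
        mul_le_mul_of_nonneg_left hsR (by positivity)
      have h2 : (9*((n₀:ℝ)+1))/ρ ≤ (10*Real.log k)/ρ := by
        gcongr
      have h2' : ((n₀:ℝ)+1) * (9/ρ) = (9*((n₀:ℝ)+1))/ρ := by ring
      push_cast
      linarith [hrbig, h1, h2, h2']
    have hfinN : (n₀+1) * sstar ≤ r := by exact_mod_cast hfinR
    omega
  exact main n₀ T₀ (le_of_eq hT₀card) hT₀36 0 hu0 hbud
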